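/- Let n ≥ 1, let σ be a permutation of {1,…,n} with permutation matrix P = P_σ, and let k ∈ SO(n,ℝ). The following are equivalent: (a) there exist a unit lower triangular matrix l with P l P⁻¹ unit lower triangular, a diagonal matrix a with strictly positive diagonal entries, and a unit upper triangular matrix m such that l = k·a·m; (b) k = u·l₀ for some u upper triangular with positive diagonal and l₀ unit lower triangular, AND P k P⁻¹ = u′·l′ for some u′ upper triangular with positive diagonal and some unit lower triangular l′ such that P⁻¹ l′ P is unit lower triangular. -/

import Mathlib

open Matrix

/-- The permutation matrix of `σ`: `(P_σ)_{ab} = 1` if `a = σ b`, else `0`. -/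
def permMat {n : ℕ} (σ : Equiv.Perm (Fin n)) : Matrix (Fin n) (Fin n) ℝ :=
  Matrix.of fun a b => if a = σ b then (1 : ℝ) else 0

/-- Unit lower triangular: `1`s on the diagonal, `0`s above it. -/
def IsUnitLower {n : ℕ} (M : Matrix (Fin n) (Fin n) ℝ) : Prop :=
  (∀ i, M i i = 1) ∧ ∀ i j : Fin n, i < j → M i j = 0

/-- Unit upper triangular: `1`s on the diagonal, `0`s below it. -/
def IsUnitUpper {n : ℕ} (M : Matrix (Fin n) (Fin n) ℝ) : Prop :=
  (∀ i, M i i = 1) ∧ ∀ i j : Fin n, j < i → M i j = 0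

/-- Upper triangular with strictly positive diagonal entries. -/
def IsUpperPos {n : ℕ} (M : Matrix (Fin n) (Fin n) ℝ) : Prop :=
  (∀ i j : Fin n, j < i → M i j = 0) ∧ ∀ i, 0 < M i i

/-- Diagonal with strictly positive diagonal entries. -/
def IsPosDiagonal {n : ℕ} (M : Matrix (Fin n) (Fin n) ℝ) : Prop :=
  (∀ i j : Fin n, i ≠ j → M i j = 0) ∧ ∀ i, 0 < M i i

/-- `SO(n,ℝ)`. -/
def IsSO {n : ℕ} (k : Matrix (Fin n) (Fin n) ℝ) : Prop :=
  kᵀ * k = 1 ∧ k.det = 1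

namespace Stmt5Aux

open Finset


variable {n : ℕ}

variable {n : ℕ}


lemma permMat_mul_apply (σ : Equiv.Perm (Fin n)) (M : Matrix (Fin n) (Fin n) ℝ) (a : Fin n)
    (b : Fin n) : (permMat σ * M) a b = M (σ⁻¹ a) b := by
  rw [Matrix.mul_apply]
  have : ∀ c : Fin n, (permMat σ) a c * M c b = if c = σ⁻¹ a then M c b else 0 := by
    intro c
    simp only [permMat, Matrix.of_apply]
    by_cases h : a = σ c
    · have h2 : c = σ⁻¹ a := by simp [h]
      rw [if_pos h, if_pos h2, one_mul]
    · have : ¬ c = σ⁻¹ a := by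
        intro hc; exact h (by simp [hc])
      rw [if_neg h, if_neg this, zero_mul]
  simp_rw [this]
  simp

lemma mul_permMat_apply (σ : Equiv.Perm (Fin n)) (M : Matrix (Fin n) (Fin n) ℝ) (a : Fin n)
    (b : Fin n) : (M * permMat σ) a b = M a (σ b) := by
  rw [Matrix.mul_apply]
  have : ∀ c : Fin n, M a c * (permMat σ) c b = if c = σ b then M a c else 0 := by
    intro c
    simp only [permMat, Matrix.of_apply]
    by_cases h : c = σ b <;> simp [h]
  simp_rw [this]
  simp

lemma permMat_mul_permMat (σ τ : Equiv.Perm (Fin n)) :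
    permMat σ * permMat τ = permMat (σ * τ) := by
  ext a b
  rw [mul_permMat_apply]
  simp [permMat]
  exact if_congr Iff.rfl rfl rfl

lemma permMat_one : permMat (1 : Equiv.Perm (Fin n)) = 1 := by
  ext a b
  simp [permMat, Matrix.one_apply]
  exact if_congr Iff.rfl rfl rfl

lemma permMat_inv (σ : Equiv.Perm (Fin n)) : (permMat σ)⁻¹ = permMat σ⁻¹ :=
  Matrix.inv_eq_right_inv (by rw [permMat_mul_permMat, mul_inv_cancel, permMat_one])

lemma permMat_transpose (σ : Equiv.Perm (Fin n)) : (permMat σ)ᵀ = permMat σ⁻¹ := by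
  ext a b
  simp only [Matrix.transpose_apply, permMat, Matrix.of_apply]
  by_cases h : b = σ a
  · simp [h]
  · have h2 : ¬ a = σ⁻¹ b := by
      intro hc; exact h (by simp [hc])
    simp [h, h2]
    exact h2

lemma conj_apply (σ : Equiv.Perm (Fin n)) (M : Matrix (Fin n) (Fin n) ℝ) (a b : Fin n) :
    (permMat σ * M * (permMat σ)⁻¹) a b = M (σ⁻¹ a) (σ⁻¹ b) := by
  rw [permMat_inv, mul_permMat_apply, permMat_mul_apply]

/-- determinant of a "triangular w.r.t. an injective weight" matrix -/
lemma det_eq_prod_diag {a : ℕ} (M : Matrix (Fin a) (Fin a) ℝ) (w : Fin a → ℕ)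
    (hw : Function.Injective w) (h : ∀ x y, w y < w x → M x y = 0) :
    M.det = ∏ x, M x x := by
  rw [Matrix.det_apply']
  rw [Finset.sum_eq_single (1 : Equiv.Perm (Fin a))]
  · simp
  · intro π _ hπ
    rcases Classical.em (∃ i, M (π i) i = 0) with ⟨i, hi⟩ | hno
    · have hz : ∏ i : Fin a, M (π i) i = 0 := Finset.prod_eq_zero (Finset.mem_univ i) hi
      rw [hz, mul_zero]
    · exfalso
      push_neg at hno
      have hle : ∀ i, w (π i) ≤ w i := by
        intro i
        by_contra hlt
        exact hno i (h (π i) i (by omega))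
      have hsum : ∑ i, w (π i) = ∑ i, w i := Equiv.sum_comp π w
      have heq : ∀ i ∈ Finset.univ, w (π i) = w i := by
        intro i _
        by_contra hne
        have hlt : w (π i) < w i := lt_of_le_of_ne (hle i) hne
        have : ∑ i, w (π i) < ∑ i, w i :=
          Finset.sum_lt_sum (fun j _ => hle j) ⟨i, Finset.mem_univ i, hlt⟩
        omega
      exact hπ (Equiv.ext fun i => hw (heq i (Finset.mem_univ i)))
  · intro h1; exact absurd (Finset.mem_univ _) h1

/-- splitting a submatrix of a product when rows of `B` in the range of `f`
are supported on the range of `f` -/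
lemma submatrix_mul_split {a b : ℕ} (B C : Matrix (Fin n) (Fin n) ℝ)
    (f : Fin a → Fin n) (hf : Function.Injective f) (g : Fin b → Fin n)
    (hB : ∀ (x : Fin a) (c : Fin n), c ∉ Set.range f → B (f x) c = 0) :
    (B * C).submatrix f g = B.submatrix f f * C.submatrix f g := by
  ext x y
  rw [Matrix.submatrix_apply, Matrix.mul_apply, Matrix.mul_apply]
  have h1 : ∑ x' : Fin a, B.submatrix f f x x' * C.submatrix f g x' y
      = ∑ c ∈ Finset.univ.map ⟨f, hf⟩, B (f x) c * C c (g y) := by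
    rw [Finset.sum_map]
    rfl
  rw [h1]
  refine (Finset.sum_subset (Finset.subset_univ _) ?_).symm
  intro c _ hc
  have : c ∉ Set.range f := by
    intro ⟨x', hx'⟩
    exact hc (Finset.mem_map.2 ⟨x', Finset.mem_univ _, hx'⟩)
  rw [hB x c this, zero_mul]

/-- products of lower triangular matrices -/
lemma mul_lower {A B : Matrix (Fin n) (Fin n) ℝ}
    (hA : ∀ i j : Fin n, i < j → A i j = 0) (hB : ∀ i j : Fin n, i < j → B i j = 0) :
    (∀ i j : Fin n, i < j → (A * B) i j = 0) ∧ ∀ i, (A * B) i i = A i i * B i i := by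
  constructor
  · intro i j hij
    rw [Matrix.mul_apply]
    apply Finset.sum_eq_zero
    intro c _
    rcases le_or_gt c i with h | h
    · rw [hB c j (lt_of_le_of_lt h hij), mul_zero]
    · rw [hA i c h, zero_mul]
  · intro i
    rw [Matrix.mul_apply]
    rw [Finset.sum_eq_single i]
    · intro c _ hc
      rcases lt_or_gt_of_ne hc with h | h
      · rw [hB c i h, mul_zero]
      · rw [hA i c h, zero_mul]
    · intro h1; exact absurd (Finset.mem_univ _) h1

lemma mul_upper {A B : Matrix (Fin n) (Fin n) ℝ}
    (hA : ∀ i j : Fin n, j < i → A i j = 0) (hB : ∀ i j : Fin n, j < i → B i j = 0) :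
    (∀ i j : Fin n, j < i → (A * B) i j = 0) ∧ ∀ i, (A * B) i i = A i i * B i i := by
  constructor
  · intro i j hij
    rw [Matrix.mul_apply]
    apply Finset.sum_eq_zero
    intro c _
    rcases le_or_gt i c with h | h
    · rw [hB c j (lt_of_lt_of_le hij h), mul_zero]
    · rw [hA i c h, zero_mul]
  · intro i
    rw [Matrix.mul_apply]
    rw [Finset.sum_eq_single i]
    · intro c _ hc
      rcases lt_or_gt_of_ne hc with h | h
      · rw [hA i c h, zero_mul]
      · rw [hB c i h, mul_zero]
    · intro h1; exact absurd (Finset.mem_univ _) h1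

lemma det_lower {L : Matrix (Fin n) (Fin n) ℝ} (hL : ∀ i j : Fin n, i < j → L i j = 0) :
    L.det = ∏ i, L i i := by
  have h0 : L = L.submatrix (Fin.castLE (le_refl n)) (Fin.castLE (le_refl n)) := by
    ext i j; simp
  have : L.det = ∏ x : Fin n, L x x := by
    apply det_eq_prod_diag L (fun x => n - (x : ℕ))
    · intro x y hxy
      have hxy' : n - (x : ℕ) = n - (y : ℕ) := hxy
      have hx : (x : ℕ) < n := x.isLt
      have hy : (y : ℕ) < n := y.isLt
      exact Fin.ext (by omega)
    · intro x y hxy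
      have hxy' : n - (y : ℕ) < n - (x : ℕ) := hxy
      apply hL
      have hx : (x : ℕ) < n := x.isLt
      have hy : (y : ℕ) < n := y.isLt
      exact Fin.lt_def.2 (by omega)
  exact this

lemma det_upper {U : Matrix (Fin n) (Fin n) ℝ} (hU : ∀ i j : Fin n, j < i → U i j = 0) :
    U.det = ∏ i, U i i := by
  apply det_eq_prod_diag U (fun x => (x : ℕ)) (fun x y h => Fin.ext h)
  intro x y hxy
  exact hU x y (Fin.lt_def.2 hxy)

/-- inverse of a lower triangular matrix with nonzero diagonal -/
lemma inv_lower {L : Matrix (Fin n) (Fin n) ℝ} (hL : ∀ i j : Fin n, i < j → L i j = 0)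
    (hd : ∀ i, L i i ≠ 0) :
    (∀ i j : Fin n, i < j → L⁻¹ i j = 0) ∧ (∀ i, L⁻¹ i i = (L i i)⁻¹) ∧
      L * L⁻¹ = 1 ∧ L⁻¹ * L = 1 := by
  have hdet : L.det ≠ 0 := by
    rw [det_lower hL]
    exact Finset.prod_ne_zero_iff.2 fun i _ => hd i
  have hunit : IsUnit L.det := isUnit_iff_ne_zero.2 hdet
  letI := Matrix.invertibleOfIsUnitDet L hunit
  have hbt : L.BlockTriangular (OrderDual.toDual : Fin n → (Fin n)ᵒᵈ) := by
    intro i j hij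
    exact hL i j hij
  have hinv : L⁻¹.BlockTriangular (OrderDual.toDual : Fin n → (Fin n)ᵒᵈ) :=
    Matrix.blockTriangular_inv_of_blockTriangular hbt
  have hlow : ∀ i j : Fin n, i < j → L⁻¹ i j = 0 := fun i j hij => hinv hij
  have hone : L * L⁻¹ = 1 := Matrix.mul_nonsing_inv L hunit
  refine ⟨hlow, ?_, hone, Matrix.nonsing_inv_mul L hunit⟩
  intro i
  have h1 : (L * L⁻¹) i i = 1 := by rw [hone, Matrix.one_apply_eq]
  rw [(mul_lower hL hlow).2 i, mul_comm] at h1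
  exact eq_inv_of_mul_eq_one_left h1

lemma inv_upper {U : Matrix (Fin n) (Fin n) ℝ} (hU : ∀ i j : Fin n, j < i → U i j = 0)
    (hd : ∀ i, U i i ≠ 0) :
    (∀ i j : Fin n, j < i → U⁻¹ i j = 0) ∧ (∀ i, U⁻¹ i i = (U i i)⁻¹) ∧
      U * U⁻¹ = 1 ∧ U⁻¹ * U = 1 := by
  have hdet : U.det ≠ 0 := by
    rw [det_upper hU]
    exact Finset.prod_ne_zero_iff.2 fun i _ => hd i
  have hunit : IsUnit U.det := isUnit_iff_ne_zero.2 hdet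
  letI := Matrix.invertibleOfIsUnitDet U hunit
  have hbt : U.BlockTriangular (id : Fin n → Fin n) := by
    intro i j hij
    exact hU i j hij
  have hinv : U⁻¹.BlockTriangular (id : Fin n → Fin n) :=
    Matrix.blockTriangular_inv_of_blockTriangular hbt
  have hup : ∀ i j : Fin n, j < i → U⁻¹ i j = 0 := fun i j hij => hinv hij
  have hone : U * U⁻¹ = 1 := Matrix.mul_nonsing_inv U hunit
  refine ⟨hup, ?_, hone, Matrix.nonsing_inv_mul U hunit⟩
  intro i
  have h1 : (U * U⁻¹) i i = 1 := by rw [hone, Matrix.one_apply_eq]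
  rw [(mul_upper hU hup).2 i, mul_comm] at h1
  exact eq_inv_of_mul_eq_one_left h1


/-- LU decomposition with positive diagonal, from positive leading principal minors. -/
lemma lu_exists : ∀ (N : ℕ) (A : Matrix (Fin N) (Fin N) ℝ),
    (∀ (j : ℕ) (hj : j ≤ N), 0 < (A.submatrix (Fin.castLE hj) (Fin.castLE hj)).det) →
    ∃ l v : Matrix (Fin N) (Fin N) ℝ,
      ((∀ i, l i i = 1) ∧ ∀ i j, i < j → l i j = 0) ∧
      ((∀ i j, j < i → v i j = 0) ∧ ∀ i, 0 < v i i) ∧ A = l * v := by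
  intro N
  induction N with
  | zero =>
    intro A _
    refine ⟨1, 1, ⟨fun i => i.elim0, fun i _ _ => i.elim0⟩,
      ⟨fun i _ _ => i.elim0, fun i => i.elim0⟩, ?_⟩
    ext i j
    exact i.elim0
  | succ N ih =>
    intro A hA
    set α := A 0 0 with hα_def
    have hα : 0 < α := by
      have h1 : (1:ℕ) ≤ N+1 := by omega
      have := hA 1 h1
      rw [Matrix.det_fin_one] at this
      simpa using this
    have hα' : α ≠ 0 := ne_of_gt hα
    set A' : Matrix (Fin N) (Fin N) ℝ :=
      Matrix.of (fun i j => A i.succ j.succ - A i.succ 0 * A 0 j.succ / α) with hA'_def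
    have key : ∀ (j : ℕ) (hj : j ≤ N),
        (A.submatrix (Fin.castLE (by omega : j + 1 ≤ N + 1))
          (Fin.castLE (by omega : j + 1 ≤ N + 1))).det
        = α * (A'.submatrix (Fin.castLE hj) (Fin.castLE hj)).det := by
      intro j hj
      have hj1 : j + 1 ≤ N + 1 := by omega
      set Lj : Matrix (Fin (j+1)) (Fin (j+1)) ℝ :=
        Matrix.of (Fin.cons (Fin.cons 1 (fun _ => 0))
          (fun x' => Fin.cons (A (Fin.castLE hj1 x'.succ) 0 / α)
            (fun y' => if x' = y' then (1:ℝ) else 0))) with hLj_def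
      set Nj : Matrix (Fin (j+1)) (Fin (j+1)) ℝ :=
        Matrix.of (Fin.cons (fun y => A 0 (Fin.castLE hj1 y))
          (fun x' => Fin.cons 0
            (fun y' => A' (Fin.castLE hj x') (Fin.castLE hj y')))) with hNj_def
      have hsucc : ∀ x' : Fin j, Fin.castLE hj1 x'.succ = (Fin.castLE hj x').succ :=
        fun x' => Fin.ext (by simp)
      have h00 : Fin.castLE hj1 (0 : Fin (j+1)) = 0 := Fin.ext (by simp)
      have claim1 : A.submatrix (Fin.castLE hj1) (Fin.castLE hj1) = Lj * Nj := by
        ext x y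
        rw [Matrix.submatrix_apply, Matrix.mul_apply, Fin.sum_univ_succ]
        rcases Fin.eq_zero_or_eq_succ x with rfl | ⟨x', rfl⟩
        · have hz : ∀ c' : Fin j, Lj 0 c'.succ * Nj c'.succ y = 0 := by
            intro c'
            have h : Lj 0 c'.succ = 0 := by simp [hLj_def]
            rw [h, zero_mul]
          rw [Finset.sum_congr rfl (fun c' _ => hz c'), Finset.sum_const_zero, add_zero]
          have h0 : Lj 0 0 = 1 := by simp [hLj_def]
          have h1 : Nj 0 y = A 0 (Fin.castLE hj1 y) := by simp [hNj_def]
          rw [h0, h1, one_mul, h00]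
        · have hsum : ∑ c' : Fin j, Lj x'.succ c'.succ * Nj c'.succ y = Nj x'.succ y := by
            rw [Finset.sum_eq_single x']
            · have h : Lj x'.succ x'.succ = 1 := by simp [hLj_def]
              rw [h, one_mul]
            · intro c' _ hc'
              have h : Lj x'.succ c'.succ = 0 := by
                simp only [hLj_def, Matrix.of_apply, Fin.cons_succ]
                exact if_neg (fun hh : x' = c' => hc' hh.symm)
              rw [h, zero_mul]
            · intro h; exact absurd (Finset.mem_univ _) h
          rw [hsum]
          have hL0 : Lj x'.succ 0 = A (Fin.castLE hj1 x'.succ) 0 / α := by simp [hLj_def]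
          have hN0 : Nj 0 y = A 0 (Fin.castLE hj1 y) := by simp [hNj_def]
          rw [hL0, hN0]
          rcases Fin.eq_zero_or_eq_succ y with rfl | ⟨y', rfl⟩
          · have h : Nj x'.succ 0 = 0 := by simp [hNj_def]
            rw [h, add_zero, h00, ← hα_def]
            field_simp
          · have h : Nj x'.succ y'.succ = A' (Fin.castLE hj x') (Fin.castLE hj y') := by
              simp [hNj_def]
            rw [h]
            simp only [hA'_def, Matrix.of_apply]
            rw [← hsucc x', ← hsucc y']
            ring
      have hLj_lower : ∀ x y : Fin (j+1), x < y → Lj x y = 0 := by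
        intro x y hxy
        have hy0 : y ≠ 0 := by
          intro h; rw [h] at hxy; exact absurd hxy (Fin.not_lt_zero x)
        obtain ⟨y', rfl⟩ := Fin.eq_succ_of_ne_zero hy0
        rcases Fin.eq_zero_or_eq_succ x with rfl | ⟨x', rfl⟩
        · simp [hLj_def]
        · have hne : x' ≠ y' := by
            intro h
            rw [h] at hxy
            exact absurd hxy (lt_irrefl _)
          simp only [hLj_def, Matrix.of_apply, Fin.cons_succ]
          rw [if_neg hne]
      have hLj_diag : ∀ x : Fin (j+1), Lj x x = 1 := by
        intro x
        rcases Fin.eq_zero_or_eq_succ x with rfl | ⟨x', rfl⟩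
        · simp [hLj_def]
        · simp [hLj_def]
      have hLj_det : Lj.det = 1 := by
        rw [det_lower hLj_lower]
        exact Finset.prod_eq_one (fun x _ => hLj_diag x)
      have hNj_det : Nj.det = α * (A'.submatrix (Fin.castLE hj) (Fin.castLE hj)).det := by
        rw [Matrix.det_succ_column_zero, Fin.sum_univ_succ]
        have hz : ∀ x' : Fin j, (-1 : ℝ) ^ ((x'.succ : Fin (j+1)) : ℕ) * Nj x'.succ 0 *
            (Nj.submatrix x'.succ.succAbove Fin.succ).det = 0 := by
          intro x'
          have h : Nj x'.succ 0 = 0 := by simp [hNj_def]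
          rw [h, mul_zero, zero_mul]
        rw [Finset.sum_congr rfl (fun x' _ => hz x'), Finset.sum_const_zero, add_zero]
        have h0 : Nj 0 0 = α := by
          have : Nj 0 0 = A 0 (Fin.castLE hj1 0) := by simp [hNj_def]
          rw [this, h00]
        have hsub : Nj.submatrix (Fin.succAbove 0) Fin.succ
            = A'.submatrix (Fin.castLE hj) (Fin.castLE hj) := by
          ext x y
          rw [Matrix.submatrix_apply, Matrix.submatrix_apply, Fin.succAbove_zero]
          simp [hNj_def]
        rw [h0, hsub]
        simp
      rw [claim1, Matrix.det_mul, hLj_det, one_mul, hNj_det]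
    have hA' : ∀ (j : ℕ) (hj : j ≤ N),
        0 < (A'.submatrix (Fin.castLE hj) (Fin.castLE hj)).det := by
      intro j hj
      have h1 := hA (j+1) (by omega)
      rw [key j hj] at h1
      nlinarith
    obtain ⟨l', v', ⟨hl'd, hl'z⟩, ⟨hv'z, hv'd⟩, hA'eq⟩ := ih A' hA'
    set l : Matrix (Fin (N+1)) (Fin (N+1)) ℝ :=
      Matrix.of (Fin.cons (Fin.cons 1 (fun _ => 0))
        (fun x' => Fin.cons (A x'.succ 0 / α) (fun y' => l' x' y'))) with hl_def
    set v : Matrix (Fin (N+1)) (Fin (N+1)) ℝ :=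
      Matrix.of (Fin.cons (fun y => A 0 y)
        (fun x' => Fin.cons 0 (fun y' => v' x' y'))) with hv_def
    refine ⟨l, v, ⟨?_, ?_⟩, ⟨?_, ?_⟩, ?_⟩
    · intro i
      rcases Fin.eq_zero_or_eq_succ i with rfl | ⟨i', rfl⟩
      · simp [hl_def]
      · simp [hl_def, hl'd i']
    · intro x y hxy
      have hy0 : y ≠ 0 := by
        intro h; rw [h] at hxy; exact absurd hxy (Fin.not_lt_zero x)
      obtain ⟨y', rfl⟩ := Fin.eq_succ_of_ne_zero hy0
      rcases Fin.eq_zero_or_eq_succ x with rfl | ⟨x', rfl⟩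
      · simp [hl_def]
      · have : x' < y' := by
          rw [Fin.lt_def] at hxy ⊢
          simpa using hxy
        simp [hl_def, hl'z x' y' this]
    · intro x y hxy
      have hx0 : x ≠ 0 := by
        intro h; rw [h] at hxy; exact absurd hxy (Fin.not_lt_zero y)
      obtain ⟨x', rfl⟩ := Fin.eq_succ_of_ne_zero hx0
      rcases Fin.eq_zero_or_eq_succ y with rfl | ⟨y', rfl⟩
      · simp [hv_def]
      · have : y' < x' := by
          rw [Fin.lt_def] at hxy ⊢
          simpa using hxy
        simp [hv_def, hv'z x' y' this]
    · intro i
      rcases Fin.eq_zero_or_eq_succ i with rfl | ⟨i', rfl⟩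
      · simpa [hv_def] using hα
      · simpa [hv_def] using hv'd i'
    · ext x y
      rw [Matrix.mul_apply, Fin.sum_univ_succ]
      rcases Fin.eq_zero_or_eq_succ x with rfl | ⟨x', rfl⟩
      · have hz : ∀ c' : Fin N, l 0 c'.succ * v c'.succ y = 0 := by
          intro c'
          have h : l 0 c'.succ = 0 := by simp [hl_def]
          rw [h, zero_mul]
        rw [Finset.sum_congr rfl (fun c' _ => hz c'), Finset.sum_const_zero, add_zero]
        have h0 : l 0 0 = 1 := by simp [hl_def]
        have h1 : v 0 y = A 0 y := by simp [hv_def]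
        rw [h0, h1, one_mul]
      · have hL0 : l x'.succ 0 = A x'.succ 0 / α := by simp [hl_def]
        have hN0 : v 0 y = A 0 y := by simp [hv_def]
        rw [hL0, hN0]
        rcases Fin.eq_zero_or_eq_succ y with rfl | ⟨y', rfl⟩
        · have hz : ∀ c' : Fin N, l x'.succ c'.succ * v c'.succ 0 = 0 := by
            intro c'
            have h : v c'.succ 0 = 0 := by simp [hv_def]
            rw [h, mul_zero]
          rw [Finset.sum_congr rfl (fun c' _ => hz c'), Finset.sum_const_zero, add_zero,
            ← hα_def]
          field_simp
        · have hsum : ∑ c' : Fin N, l x'.succ c'.succ * v c'.succ y'.succ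
              = ∑ c' : Fin N, l' x' c' * v' c' y' := by
            apply Finset.sum_congr rfl
            intro c' _
            have h1 : l x'.succ c'.succ = l' x' c' := by simp [hl_def]
            have h2 : v c'.succ y'.succ = v' c' y' := by simp [hv_def]
            rw [h1, h2]
          rw [hsum]
          have : ∑ c' : Fin N, l' x' c' * v' c' y' = A' x' y' := by
            rw [← Matrix.mul_apply, ← hA'eq]
          rw [this]
          simp only [hA'_def, Matrix.of_apply]
          ring


/-- For an orthogonal block matrix with `det = 1` and invertible `(1,1)` block,
the complementary diagonal blocks have equal determinants. -/
lemma block_orth {p q : Type*} [Fintype p] [Fintype q] [DecidableEq p] [DecidableEq q]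
    (A : Matrix p p ℝ) (B : Matrix p q ℝ) (C : Matrix q p ℝ) (D : Matrix q q ℝ)
    (h : Matrix.fromBlocks A B C D * (Matrix.fromBlocks A B C D)ᵀ = 1)
    (hdet : (Matrix.fromBlocks A B C D).det = 1) (hA : A.det ≠ 0) : D.det = A.det := by
  rw [Matrix.fromBlocks_transpose, Matrix.fromBlocks_multiply] at h
  rw [show (1 : Matrix (p ⊕ q) (p ⊕ q) ℝ) = Matrix.fromBlocks 1 0 0 1 from
    Matrix.fromBlocks_one.symm] at h
  have eq12 : A * Cᵀ + B * Dᵀ = 0 := by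
    have := congrArg Matrix.toBlocks₁₂ h
    rwa [Matrix.toBlocks_fromBlocks₁₂, Matrix.toBlocks_fromBlocks₁₂] at this
  have eq22 : C * Cᵀ + D * Dᵀ = 1 := by
    have := congrArg Matrix.toBlocks₂₂ h
    rwa [Matrix.toBlocks_fromBlocks₂₂, Matrix.toBlocks_fromBlocks₂₂] at this
  haveI : Invertible A := A.invertibleOfIsUnitDet (isUnit_iff_ne_zero.2 hA)
  have hd1 : (Matrix.fromBlocks A B C D).det = A.det * (D - C * A⁻¹ * B).det := by
    rw [Matrix.det_fromBlocks₁₁, Matrix.invOf_eq_nonsing_inv]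
  set S := D - C * A⁻¹ * B with hS_def
  have hAinv : A⁻¹ * A = 1 := Matrix.nonsing_inv_mul A (isUnit_iff_ne_zero.2 hA)
  have hBD : B * Dᵀ = -(A * Cᵀ) := eq_neg_of_add_eq_zero_right eq12
  have hS : S * Dᵀ = 1 := by
    have e1 : S * Dᵀ = D * Dᵀ - C * A⁻¹ * B * Dᵀ := sub_mul _ _ _
    have e2 : C * A⁻¹ * B * Dᵀ = C * A⁻¹ * (B * Dᵀ) := Matrix.mul_assoc _ _ _
    have e4 : C * A⁻¹ * (A * Cᵀ) = C * Cᵀ := by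
      rw [← Matrix.mul_assoc (C * A⁻¹) A Cᵀ, Matrix.mul_assoc C A⁻¹ A, hAinv, Matrix.mul_one]
    rw [e1, e2, hBD, Matrix.mul_neg, e4, sub_neg_eq_add, add_comm]
    exact eq22
  have hdetS : S.det * D.det = 1 := by
    have := congrArg Matrix.det hS
    rwa [Matrix.det_mul, Matrix.det_transpose, Matrix.det_one] at this
  have hAS : A.det * S.det = 1 := by rw [← hd1]; exact hdet
  have h1 : A.det = (S.det)⁻¹ := eq_inv_of_mul_eq_one_left hAS
  have h2 : D.det = (S.det)⁻¹ := eq_inv_of_mul_eq_one_left (by rw [mul_comm]; exact hdetS)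
  rw [h1, h2]

/-- Jacobi-type identity for orthogonal matrices with determinant one. -/
lemma jacobi_minor {j s : ℕ} (hjs : j + s = n) (k : Matrix (Fin n) (Fin n) ℝ)
    (hk : kᵀ * k = 1) (hdet : k.det = 1)
    (te : Fin s → Fin n) (hte : ∀ x : Fin s, (te x : ℕ) = j + (x : ℕ)) (hj : j ≤ n)
    (hpos : (k.submatrix te te).det ≠ 0) :
    (k.submatrix (Fin.castLE hj) (Fin.castLE hj)).det = (k.submatrix te te).det := by
  let e : (Fin s ⊕ Fin j) ≃ Fin n :=
    { toFun := Sum.elim te (Fin.castLE hj)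
      invFun := fun c =>
        if h : (c : ℕ) < j then Sum.inr ⟨c, h⟩ else Sum.inl ⟨(c : ℕ) - j, by omega⟩
      left_inv := by
        intro x
        rcases x with x | x
        · have h1 : (te x : ℕ) = j + (x : ℕ) := hte x
          have h2 : ¬ ((te x : ℕ) < j) := by omega
          simp only [Sum.elim_inl, h2, dif_neg, not_false_iff]
          refine (dif_neg h2).trans ?_
          exact congrArg Sum.inl (Fin.ext (by simp only [Fin.val_mk]; omega))
        · have h2 : ((Fin.castLE hj x : Fin n) : ℕ) < j := by simpa using x.isLt
          simp only [Sum.elim_inr, h2, dif_pos]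
          refine (dif_pos h2).trans ?_
          exact congrArg Sum.inr (Fin.ext (by simp))
      right_inv := by
        intro c
        by_cases h : (c : ℕ) < j
        · simp only [dif_pos h, Sum.elim_inr]
          exact Fin.ext (by simp)
        · simp only [dif_neg h, Sum.elim_inl]
          exact Fin.ext (by simp only [hte, Fin.val_mk]; omega) }
  set B := k.submatrix e e with hB_def
  have hB1 : B * Bᵀ = 1 := by
    rw [hB_def, Matrix.transpose_submatrix, Matrix.submatrix_mul_equiv,
      mul_eq_one_comm.mp hk, Matrix.submatrix_one_equiv]
  have hBdet : B.det = 1 := by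
    rw [hB_def, Matrix.det_submatrix_equiv_self, hdet]
  have h11 : B.toBlocks₁₁ = k.submatrix te te := by
    ext i j'
    simp [Matrix.toBlocks₁₁, hB_def, e]
  have h22 : B.toBlocks₂₂ = k.submatrix (Fin.castLE hj) (Fin.castLE hj) := by
    ext i j'
    simp [Matrix.toBlocks₂₂, hB_def, e]
  have hmain : (B.toBlocks₂₂).det = (B.toBlocks₁₁).det := by
    apply block_orth (B.toBlocks₁₁) (B.toBlocks₁₂) (B.toBlocks₂₁) (B.toBlocks₂₂)
    · rw [Matrix.fromBlocks_toBlocks]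
      exact hB1
    · rw [Matrix.fromBlocks_toBlocks]
      exact hBdet
    · rw [h11]
      exact hpos
  rw [← h11, ← h22, hmain]

section MinorHall

variable {a : ℕ}

/-- The "first `a` columns and column `b`" column selection. -/
def colSel (h1 : a + 1 ≤ n) (b : Fin n) : Fin (a + 1) → Fin n :=
  Fin.snoc (fun y : Fin a => Fin.castLE (Nat.le_of_succ_le h1) y) b

lemma colSel_castSucc (h1 : a + 1 ≤ n) (b : Fin n) (x : Fin a) :
    colSel h1 b x.castSucc = Fin.castLE (Nat.le_of_succ_le h1) x := by
  simp [colSel]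

lemma colSel_last (h1 : a + 1 ≤ n) (b : Fin n) :
    colSel h1 b (Fin.last a) = b := by
  simp [colSel]

/-- determinant formula for the minor on rows `0..a`, columns `0..a-1, b`
of an upper triangular matrix -/
lemma minor_det_eq (h1 : a + 1 ≤ n) (C : Matrix (Fin n) (Fin n) ℝ)
    (hC : ∀ i j : Fin n, j < i → C i j = 0) (b : Fin n) :
    (C.submatrix (Fin.castLE h1) (colSel h1 b)).det
      = (∏ x : Fin a, C (Fin.castLE (Nat.le_of_succ_le h1) x)
          (Fin.castLE (Nat.le_of_succ_le h1) x)) * C (Fin.castLE h1 (Fin.last a)) b := by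
  have hz : ∀ x y : Fin (a+1), y < x →
      (C.submatrix (Fin.castLE h1) (colSel h1 b)) x y = 0 := by
    intro x y hyx
    have hy : y ≠ Fin.last a := by
      intro hy
      rw [hy] at hyx
      exact absurd hyx (not_lt.2 (Fin.le_last x))
    obtain ⟨y', rfl⟩ := Fin.exists_castSucc_eq.2 hy
    rw [Matrix.submatrix_apply, colSel_castSucc]
    apply hC
    rw [Fin.lt_def]
    simpa using Fin.lt_def.1 hyx
  rw [det_upper hz]
  rw [Fin.prod_univ_castSucc]
  have hrow : ∀ x : Fin a, Fin.castLE h1 x.castSucc = Fin.castLE (Nat.le_of_succ_le h1) x :=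
    fun x => Fin.ext (by simp)
  have hdiag : ∀ x : Fin a,
      (C.submatrix (Fin.castLE h1) (colSel h1 b)) x.castSucc x.castSucc
        = C (Fin.castLE (Nat.le_of_succ_le h1) x) (Fin.castLE (Nat.le_of_succ_le h1) x) := by
    intro x
    rw [Matrix.submatrix_apply, colSel_castSucc, hrow]
  rw [Finset.prod_congr rfl (fun x _ => hdiag x), Matrix.submatrix_apply, colSel_last]

/-- Hall-type vanishing: same minor of a `w`-triangular matrix vanishes if `w b < w a`. -/
lemma hall_det_zero (h1 : a + 1 ≤ n) (C : Matrix (Fin n) (Fin n) ℝ) (w : Fin n → ℕ)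
    (hC : ∀ x y : Fin n, w y < w x → C x y = 0) (b : Fin n)
    (hb : w b < w (Fin.castLE h1 (Fin.last a))) :
    (C.submatrix (Fin.castLE h1) (colSel h1 b)).det = 0 := by
  set M := C.submatrix (Fin.castLE h1) (colSel h1 b) with hM
  rw [Matrix.det_apply']
  apply Finset.sum_eq_zero
  intro π _
  suffices h : ∃ i, M (π i) i = 0 by
    obtain ⟨i, hi⟩ := h
    have hz : ∏ i : Fin (a+1), M (π i) i = 0 := Finset.prod_eq_zero (Finset.mem_univ i) hi
    rw [hz, mul_zero]
  by_contra hno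
  push_neg at hno
  have key : ∀ i : Fin (a+1), w (Fin.castLE h1 (π i)) ≤ w (colSel h1 b i) := by
    intro i
    by_contra hlt
    exact hno i (hC _ _ (by omega))
  set A0 := w (Fin.castLE h1 (Fin.last a)) with hA0
  set Rf := Finset.univ.filter (fun i : Fin (a+1) => A0 ≤ w (Fin.castLE h1 i)) with hRf
  set Cf := Finset.univ.filter (fun i : Fin (a+1) => A0 ≤ w (colSel h1 b i)) with hCf
  have hcard1 : Rf.card ≤ Cf.card := by
    apply Finset.card_le_card_of_injOn (fun i => π.symm i)
    · intro i hi
      rw [hRf, Finset.mem_coe, Finset.mem_filter] at hi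
      rw [hCf, Finset.mem_coe, Finset.mem_filter]
      refine ⟨Finset.mem_univ _, ?_⟩
      calc A0 ≤ w (Fin.castLE h1 i) := hi.2
        _ = w (Fin.castLE h1 (π (π.symm i))) := by rw [Equiv.apply_symm_apply]
        _ ≤ w (colSel h1 b (π.symm i)) := key _
    · intro i _ j _ hij
      exact π.symm.injective hij
  have hlastR : Fin.last a ∈ Rf := by
    rw [hRf, Finset.mem_filter]
    exact ⟨Finset.mem_univ _, le_refl _⟩
  have hsub : Cf ⊆ Rf.erase (Fin.last a) := by
    intro i hi
    rw [hCf, Finset.mem_filter] at hi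
    have hne : i ≠ Fin.last a := by
      intro heq
      rw [heq, colSel_last] at hi
      omega
    obtain ⟨i', rfl⟩ := Fin.exists_castSucc_eq.2 hne
    rw [Finset.mem_erase]
    refine ⟨hne, ?_⟩
    rw [hRf, Finset.mem_filter]
    refine ⟨Finset.mem_univ _, ?_⟩
    have : Fin.castLE h1 i'.castSucc = Fin.castLE (Nat.le_of_succ_le h1) i' :=
      Fin.ext (by simp)
    rw [this]
    rw [colSel_castSucc] at hi
    exact hi.2
  have hcard2 : Cf.card ≤ Rf.card - 1 := by
    calc Cf.card ≤ (Rf.erase (Fin.last a)).card := Finset.card_le_card hsub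
      _ = Rf.card - 1 := Finset.card_erase_of_mem hlastR
  have hpos : 1 ≤ Rf.card := Finset.card_pos.2 ⟨_, hlastR⟩
  omega

end MinorHall

lemma conj_mul_conj {Q Qi X Y : Matrix (Fin n) (Fin n) ℝ} (h : Qi * Q = 1) :
    (Q * X * Qi) * (Q * Y * Qi) = Q * (X * Y) * Qi := by
  simp only [Matrix.mul_assoc]
  rw [← Matrix.mul_assoc Qi Q (Y * Qi), h, Matrix.one_mul]

lemma lower_out {L : Matrix (Fin n) (Fin n) ℝ} (hL : ∀ i j : Fin n, i < j → L i j = 0)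
    {a : ℕ} (ha : a ≤ n) (x : Fin a) (c : Fin n) (hc : c ∉ Set.range (Fin.castLE ha)) :
    L (Fin.castLE ha x) c = 0 := by
  have hca : ¬ ((c : ℕ) < a) := by
    intro hlt
    exact hc ⟨⟨c, hlt⟩, Fin.ext rfl⟩
  apply hL
  rw [Fin.lt_def, Fin.coe_castLE]
  have : (x : ℕ) < a := x.isLt
  omega

lemma lower_sub_det_one {L : Matrix (Fin n) (Fin n) ℝ} (hLd : ∀ i, L i i = 1)
    (hL : ∀ i j : Fin n, i < j → L i j = 0) {a : ℕ} (ha : a ≤ n) :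
    (L.submatrix (Fin.castLE ha) (Fin.castLE ha)).det = 1 := by
  have h' : ∀ x y : Fin a, x < y →
      (L.submatrix (Fin.castLE ha) (Fin.castLE ha)) x y = 0 := by
    intro x y hxy
    exact hL _ _ (by rw [Fin.lt_def]; simpa using hxy)
  rw [det_lower h']
  exact Finset.prod_eq_one (fun x _ => hLd _)

lemma castLE_inj {a : ℕ} (ha : a ≤ n) : Function.Injective (Fin.castLE ha) := by
  intro x y hxy
  exact Fin.ext (by simpa using congrArg Fin.val hxy)

/-- The master lemma: if `K = B * C` with `B` unit lower and `C` triangular w.r.t.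
an injective weight `w` with positive diagonal, then `K` has an LU decomposition
whose upper factor is also `w`-triangular. -/
lemma master (K B C : Matrix (Fin n) (Fin n) ℝ) (w : Fin n → ℕ) (hw : Function.Injective w)
    (hKBC : K = B * C) (hB : IsUnitLower B)
    (hC0 : ∀ x y : Fin n, w y < w x → C x y = 0) (hCd : ∀ i, 0 < C i i) :
    ∃ lM vM : Matrix (Fin n) (Fin n) ℝ,
      ((∀ i, lM i i = 1) ∧ ∀ i j : Fin n, i < j → lM i j = 0) ∧
      ((∀ i j : Fin n, j < i → vM i j = 0) ∧ ∀ i, 0 < vM i i) ∧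
      K = lM * vM ∧ ∀ x y : Fin n, w y < w x → vM x y = 0 := by
  have hminors : ∀ (a : ℕ) (ha : a ≤ n),
      0 < (K.submatrix (Fin.castLE ha) (Fin.castLE ha)).det := by
    intro a ha
    rw [hKBC, submatrix_mul_split B C _ (castLE_inj ha) _ (fun x c hc => lower_out hB.2 ha x c hc),
      Matrix.det_mul, lower_sub_det_one hB.1 hB.2 ha, one_mul]
    have h' : ∀ x y : Fin a, (fun z => w (Fin.castLE ha z)) y < (fun z => w (Fin.castLE ha z)) x →
        (C.submatrix (Fin.castLE ha) (Fin.castLE ha)) x y = 0 := by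
      intro x y hxy
      exact hC0 _ _ hxy
    rw [det_eq_prod_diag (C.submatrix (Fin.castLE ha) (Fin.castLE ha))
      (fun x => w (Fin.castLE ha x)) (fun x y hxy => castLE_inj ha (hw hxy)) h']
    exact Finset.prod_pos (fun x _ => hCd _)
  obtain ⟨lM, vM, hlM, hvM, hKeq⟩ := lu_exists n K hminors
  refine ⟨lM, vM, hlM, hvM, hKeq, ?_⟩
  intro x y hxy
  rcases lt_trichotomy y x with h | h | h
  · exact hvM.1 x y h
  · subst h; exact absurd hxy (lt_irrefl _)
  · -- x < y
    have h1 : (x : ℕ) + 1 ≤ n := x.isLt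
    have hlast : Fin.castLE h1 (Fin.last (x : ℕ)) = x := Fin.ext (by simp)
    have e1 : (K.submatrix (Fin.castLE h1) (colSel h1 y)).det
        = (∏ z : Fin (x : ℕ), vM (Fin.castLE (Nat.le_of_succ_le h1) z)
            (Fin.castLE (Nat.le_of_succ_le h1) z)) * vM x y := by
      rw [hKeq, submatrix_mul_split lM vM _ (castLE_inj h1) _
        (fun x' c hc => lower_out hlM.2 h1 x' c hc),
        Matrix.det_mul, lower_sub_det_one hlM.1 hlM.2 h1, one_mul,
        minor_det_eq h1 vM hvM.1 y, hlast]
    have e2 : (K.submatrix (Fin.castLE h1) (colSel h1 y)).det = 0 := by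
      rw [hKBC, submatrix_mul_split B C _ (castLE_inj h1) _
        (fun x' c hc => lower_out hB.2 h1 x' c hc),
        Matrix.det_mul, lower_sub_det_one hB.1 hB.2 h1, one_mul]
      exact hall_det_zero h1 C w hC0 y (by rw [hlast]; exact hxy)
    rw [e2] at e1
    have hp : 0 < ∏ z : Fin (x : ℕ), vM (Fin.castLE (Nat.le_of_succ_le h1) z)
        (Fin.castLE (Nat.le_of_succ_le h1) z) := Finset.prod_pos (fun z _ => hvM.2 _)
    rcases mul_eq_zero.mp e1.symm with h0 | h0
    · exact absurd h0 (ne_of_gt hp)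
    · exact h0

/-- flip an LU decomposition of an orthogonal matrix into a UL decomposition -/
lemma flip_lu (K lM vM : Matrix (Fin n) (Fin n) ℝ) (hK1 : Kᵀ * K = 1)
    (hl : (∀ i, lM i i = 1) ∧ ∀ i j : Fin n, i < j → lM i j = 0)
    (hv : (∀ i j : Fin n, j < i → vM i j = 0) ∧ ∀ i, 0 < vM i i)
    (hKeq : K = lM * vM) :
    ∃ u l₀ : Matrix (Fin n) (Fin n) ℝ, IsUpperPos u ∧ IsUnitLower l₀ ∧ K = u * l₀ ∧
      l₀ = Matrix.diagonal (fun i => ((vM⁻¹) i i)⁻¹) * (vM⁻¹)ᵀ := by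
  obtain ⟨hv1, hv2, hvv, hvv'⟩ := inv_upper hv.1 (fun i => ne_of_gt (hv.2 i))
  obtain ⟨hl1, hl2, hll, hll'⟩ := inv_lower hl.2 (fun i => by rw [hl.1 i]; exact one_ne_zero)
  have hL : (vM⁻¹ * lM⁻¹) * K = 1 := by
    rw [hKeq]
    calc vM⁻¹ * lM⁻¹ * (lM * vM) = vM⁻¹ * (lM⁻¹ * lM * vM) := by
          simp only [Matrix.mul_assoc]
      _ = vM⁻¹ * vM := by rw [hll', Matrix.one_mul]
      _ = 1 := hvv'
  have hKT : Kᵀ = vM⁻¹ * lM⁻¹ := (Matrix.left_inv_eq_left_inv hL hK1).symm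
  have hKflip : K = (lM⁻¹)ᵀ * (vM⁻¹)ᵀ := by
    have h := congrArg Matrix.transpose hKT
    rwa [Matrix.transpose_transpose, Matrix.transpose_mul] at h
  set d : Fin n → ℝ := fun i => (vM⁻¹) i i with hd
  have hdpos : ∀ i, 0 < d i := by
    intro i
    rw [hd]
    dsimp only
    rw [hv2 i]
    exact inv_pos.2 (hv.2 i)
  refine ⟨(lM⁻¹)ᵀ * Matrix.diagonal d, Matrix.diagonal (fun i => (d i)⁻¹) * (vM⁻¹)ᵀ,
    ⟨?_, ?_⟩, ⟨?_, ?_⟩, ?_, rfl⟩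
  · intro i j hij
    rw [Matrix.mul_diagonal, Matrix.transpose_apply, hl1 j i hij, zero_mul]
  · intro i
    rw [Matrix.mul_diagonal, Matrix.transpose_apply, hl2 i, hl.1 i, inv_one, one_mul]
    exact hdpos i
  · intro i
    rw [Matrix.diagonal_mul, Matrix.transpose_apply]
    exact inv_mul_cancel₀ (ne_of_gt (hdpos i))
  · intro i j hij
    rw [Matrix.diagonal_mul, Matrix.transpose_apply, hv1 j i hij, mul_zero]
  · rw [hKflip, Matrix.mul_assoc, ← Matrix.mul_assoc (Matrix.diagonal d),
      Matrix.diagonal_mul_diagonal]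
    have hone : (fun i => d i * (d i)⁻¹) = fun _ => (1 : ℝ) :=
      funext fun i => mul_inv_cancel₀ (ne_of_gt (hdpos i))
    rw [hone, Matrix.diagonal_one, Matrix.one_mul]


lemma forward_dir (σ : Equiv.Perm (Fin n)) (k l a m : Matrix (Fin n) (Fin n) ℝ)
    (hk1 : kᵀ * k = 1)
    (hl : IsUnitLower l) (hlt : IsUnitLower (permMat σ * l * (permMat σ)⁻¹))
    (ha : IsPosDiagonal a) (hm : IsUnitUpper m) (heq : l = k * a * m) :
    (∃ u l₀ : Matrix (Fin n) (Fin n) ℝ, IsUpperPos u ∧ IsUnitLower l₀ ∧ k = u * l₀) ∧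
    (∃ u' l' : Matrix (Fin n) (Fin n) ℝ, IsUpperPos u' ∧ IsUnitLower l' ∧
      IsUnitLower ((permMat σ)⁻¹ * l' * permMat σ) ∧
      permMat σ * k * (permMat σ)⁻¹ = u' * l') := by
  have hPi : (permMat σ)⁻¹ = permMat σ⁻¹ := permMat_inv σ
  have hPPi : permMat σ * (permMat σ)⁻¹ = 1 := by
    rw [hPi, permMat_mul_permMat, mul_inv_cancel, permMat_one]
  have hPiP : (permMat σ)⁻¹ * permMat σ = 1 := by
    rw [hPi, permMat_mul_permMat, inv_mul_cancel, permMat_one]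
  -- a is an honest diagonal matrix
  have hadiag : a = Matrix.diagonal (fun i => a i i) := by
    ext i j
    by_cases hij : i = j
    · subst hij; rw [Matrix.diagonal_apply_eq]
    · rw [Matrix.diagonal_apply_ne _ hij]; exact ha.1 i j hij
  obtain ⟨hmi_up, hmi_diag, hmm, hmm'⟩ :=
    inv_upper hm.2 (fun i => by rw [hm.1 i]; exact one_ne_zero)
  set dinv := Matrix.diagonal (fun i => (a i i)⁻¹) with hdinv_def
  set v := m⁻¹ * dinv with hv_def
  have hv_up : ∀ i j : Fin n, j < i → v i j = 0 := by
    intro i j hij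
    rw [hv_def, hdinv_def, Matrix.mul_diagonal, hmi_up i j hij, zero_mul]
  have hv_pos : ∀ i, 0 < v i i := by
    intro i
    rw [hv_def, hdinv_def, Matrix.mul_diagonal, hmi_diag i, hm.1 i, inv_one, one_mul]
    exact inv_pos.2 (ha.2 i)
  have haa : a * dinv = 1 := by
    rw [hdinv_def]
    nth_rewrite 1 [hadiag]
    rw [Matrix.diagonal_mul_diagonal]
    have hone : (fun i => a i i * (a i i)⁻¹) = fun _ => (1 : ℝ) :=
      funext fun i => mul_inv_cancel₀ (ne_of_gt (ha.2 i))
    rw [hone, Matrix.diagonal_one]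
  have hkeq : k = l * v := by
    rw [heq, hv_def, ← Matrix.mul_assoc (k * a * m) m⁻¹ dinv,
      Matrix.mul_assoc (k * a) m m⁻¹, hmm, Matrix.mul_one, Matrix.mul_assoc k a dinv, haa,
      Matrix.mul_one]
  obtain ⟨u, l₀, hu, hl₀, hkul, _⟩ := flip_lu k l v hk1 ⟨hl.1, hl.2⟩ ⟨hv_up, hv_pos⟩ hkeq
  refine ⟨⟨u, l₀, hu, hl₀, hkul⟩, ?_⟩
  -- conjugated data
  set P := permMat σ with hP_def
  set K := P * k * P⁻¹ with hK_def
  set Bm := P * l * P⁻¹ with hBm_def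
  set Cm := P * v * P⁻¹ with hCm_def
  have hPT : Pᵀ = P⁻¹ := by rw [hP_def, permMat_transpose, hPi]
  have hPiT : (P⁻¹)ᵀ = P := by rw [hPi, permMat_transpose, inv_inv, hP_def]
  have hKT : Kᵀ = P * kᵀ * P⁻¹ := by
    rw [hK_def, Matrix.transpose_mul, Matrix.transpose_mul, hPiT, hPT, Matrix.mul_assoc]
  have hK1 : Kᵀ * K = 1 := by
    rw [hKT, hK_def, conj_mul_conj hPiP, hk1, Matrix.mul_one, hPPi]
  have hKBC : K = Bm * Cm := by
    rw [hK_def, hBm_def, hCm_def, conj_mul_conj hPiP, ← hkeq]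
  set w : Fin n → ℕ := fun x => ((σ⁻¹ x : Fin n) : ℕ) with hw_def
  have hw : Function.Injective w := by
    intro x y hxy
    have : (σ⁻¹ x : Fin n) = σ⁻¹ y := Fin.ext hxy
    simpa using congrArg σ this
  have hCmval : ∀ x y : Fin n, Cm x y = v (σ⁻¹ x) (σ⁻¹ y) := by
    intro x y
    rw [hCm_def, hP_def, conj_apply]
  have hC0 : ∀ x y : Fin n, w y < w x → Cm x y = 0 := by
    intro x y hxy
    rw [hCmval]
    exact hv_up _ _ (Fin.lt_def.2 hxy)
  have hCd : ∀ i, 0 < Cm i i := by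
    intro i
    rw [hCmval]
    exact hv_pos _
  obtain ⟨lM, vM, hlM, hvM, hKeq2, hpat⟩ := master K Bm Cm w hw hKBC hlt hC0 hCd
  obtain ⟨u', l', hu', hl', hKul', hl'eq⟩ := flip_lu K lM vM hK1 hlM hvM hKeq2
  -- vM⁻¹ is w-triangular
  have hvMdet : IsUnit vM.det := by
    rw [det_upper hvM.1]
    exact isUnit_iff_ne_zero.2 (ne_of_gt (Finset.prod_pos (fun i _ => hvM.2 i)))
  letI := vM.invertibleOfIsUnitDet hvMdet
  have hvMbt : vM.BlockTriangular w := fun i j hij => hpat i j hij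
  have hvMinv_bt : (vM⁻¹).BlockTriangular w :=
    Matrix.blockTriangular_inv_of_blockTriangular hvMbt
  have hconj : ∀ i j : Fin n, (P⁻¹ * l' * P) i j = l' (σ i) (σ j) := by
    intro i j
    have hP2 : P⁻¹ * l' * P = permMat σ⁻¹ * l' * (permMat σ⁻¹)⁻¹ := by
      rw [hPi, permMat_inv σ⁻¹, inv_inv, hP_def]
    rw [hP2, conj_apply]
    simp
  refine ⟨u', l', hu', hl', ⟨?_, ?_⟩, hKul'⟩
  · intro i
    rw [hconj i i]
    exact hl'.1 _
  · intro i j hij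
    rw [hconj i j, hl'eq, Matrix.diagonal_mul, Matrix.transpose_apply]
    have hz : (vM⁻¹) (σ j) (σ i) = 0 := by
      apply hvMinv_bt
      show w (σ i) < w (σ j)
      rw [hw_def]
      simpa using (Fin.lt_def.1 hij)
    rw [hz, mul_zero]


lemma backward_dir (σ : Equiv.Perm (Fin n)) (k u' l' : Matrix (Fin n) (Fin n) ℝ)
    (hk1 : kᵀ * k = 1)
    (hu' : IsUpperPos u')
    (hl'2 : IsUnitLower ((permMat σ)⁻¹ * l' * permMat σ))
    (hk2 : permMat σ * k * (permMat σ)⁻¹ = u' * l') :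
    ∃ l a m : Matrix (Fin n) (Fin n) ℝ,
      IsUnitLower l ∧ IsUnitLower (permMat σ * l * (permMat σ)⁻¹) ∧
      IsPosDiagonal a ∧ IsUnitUpper m ∧ l = k * a * m := by
  have hPi : (permMat σ)⁻¹ = permMat σ⁻¹ := permMat_inv σ
  have hPPi : permMat σ * (permMat σ)⁻¹ = 1 := by
    rw [hPi, permMat_mul_permMat, mul_inv_cancel, permMat_one]
  have hPiP : (permMat σ)⁻¹ * permMat σ = 1 := by
    rw [hPi, permMat_mul_permMat, inv_mul_cancel, permMat_one]
  set P := permMat σ with hP_def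
  set lam := P⁻¹ * l' * P with hlam_def
  have hlamUL : IsUnitLower lam := hl'2
  obtain ⟨hlami_low, hlami_diag, hlamm, hlamm'⟩ :=
    inv_lower hlamUL.2 (fun i => by rw [hlamUL.1 i]; exact one_ne_zero)
  obtain ⟨hu'i_up, hu'i_diag, hu'u, hu'u'⟩ := inv_upper hu'.1 (fun i => ne_of_gt (hu'.2 i))
  -- k = (P⁻¹ u' P) * lam
  have hkk : k = (P⁻¹ * u' * P) * (P⁻¹ * l' * P) := by
    have h0 : P⁻¹ * (P * k * P⁻¹) * P = k := by
      calc P⁻¹ * (P * k * P⁻¹) * P = (P⁻¹ * P) * k * (P⁻¹ * P) := by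
            simp only [Matrix.mul_assoc]
        _ = k := by rw [hPiP, Matrix.one_mul, Matrix.mul_one]
    rw [hk2] at h0
    rw [← h0, conj_mul_conj hPPi]
  set Cm := P⁻¹ * u'⁻¹ * P with hCm_def
  have hconjP : ∀ (M : Matrix (Fin n) (Fin n) ℝ) (i j : Fin n),
      (P⁻¹ * M * P) i j = M (σ i) (σ j) := by
    intro M i j
    have hP2 : P⁻¹ * M * P = permMat σ⁻¹ * M * (permMat σ⁻¹)⁻¹ := by
      rw [hPi, permMat_inv σ⁻¹, inv_inv, hP_def]
    rw [hP2, conj_apply]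
    simp
  have hKT : kᵀ = lam⁻¹ * Cm := by
    have hLI : (lam⁻¹ * Cm) * k = 1 := by
      rw [hkk, hCm_def, ← hlam_def]
      calc lam⁻¹ * (P⁻¹ * u'⁻¹ * P) * ((P⁻¹ * u' * P) * lam)
          = lam⁻¹ * ((P⁻¹ * u'⁻¹ * P) * (P⁻¹ * u' * P)) * lam := by
            simp only [Matrix.mul_assoc]
        _ = lam⁻¹ * (P⁻¹ * (u'⁻¹ * u') * P) * lam := by rw [conj_mul_conj hPPi]
        _ = lam⁻¹ * lam := by rw [hu'u', Matrix.mul_one, hPiP, Matrix.mul_one]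
        _ = 1 := hlamm'
    exact (Matrix.left_inv_eq_left_inv hLI hk1).symm
  set w : Fin n → ℕ := fun x => ((σ x : Fin n) : ℕ) with hw_def
  have hw : Function.Injective w := by
    intro x y hxy
    have : (σ x : Fin n) = σ y := Fin.ext hxy
    simpa using congrArg (fun z => σ.symm z) this
  have hCmval : ∀ x y : Fin n, Cm x y = u'⁻¹ (σ x) (σ y) := by
    intro x y
    rw [hCm_def, hconjP]
  have hC0 : ∀ x y : Fin n, w y < w x → Cm x y = 0 := by
    intro x y hxy
    rw [hCmval]
    exact hu'i_up _ _ (Fin.lt_def.2 hxy)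
  have hCd : ∀ i, 0 < Cm i i := by
    intro i
    rw [hCmval, hu'i_diag]
    exact inv_pos.2 (hu'.2 _)
  have hlamiUL : IsUnitLower lam⁻¹ :=
    ⟨fun i => by rw [hlami_diag i, hlamUL.1 i, inv_one], hlami_low⟩
  obtain ⟨lM, vM, hlM, hvM, hKeq2, hpat⟩ := master kᵀ lam⁻¹ Cm w hw hKT hlamiUL hC0 hCd
  -- k = vMᵀ * lMᵀ
  have hkflip : k = vMᵀ * lMᵀ := by
    have h := congrArg Matrix.transpose hKeq2
    rwa [Matrix.transpose_transpose, Matrix.transpose_mul] at h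
  obtain ⟨hlMi_low, hlMi_diag, hlMm, hlMm'⟩ :=
    inv_lower hlM.2 (fun i => by rw [hlM.1 i]; exact one_ne_zero)
  set dv : Fin n → ℝ := fun i => vM i i with hdv_def
  have hdvpos : ∀ i, 0 < dv i := fun i => hvM.2 i
  set l := vMᵀ * Matrix.diagonal (fun i => (dv i)⁻¹) with hl_def
  set a := Matrix.diagonal (fun i => (dv i)⁻¹) with ha_def
  set m := Matrix.diagonal dv * (lM⁻¹)ᵀ * Matrix.diagonal (fun i => (dv i)⁻¹) with hm_def
  have hlval : ∀ i j : Fin n, l i j = vM j i * (dv j)⁻¹ := by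
    intro i j
    rw [hl_def, Matrix.mul_diagonal, Matrix.transpose_apply]
  refine ⟨l, a, m, ⟨?_, ?_⟩, ⟨?_, ?_⟩, ⟨?_, ?_⟩, ⟨?_, ?_⟩, ?_⟩
  · intro i
    rw [hlval]
    exact mul_inv_cancel₀ (ne_of_gt (hdvpos i))
  · intro i j hij
    rw [hlval, hvM.1 j i hij, zero_mul]
  · intro i
    rw [hP_def, conj_apply, hlval]
    exact mul_inv_cancel₀ (ne_of_gt (hdvpos _))
  · intro x y hxy
    rw [hP_def, conj_apply, hlval]
    have hz : vM (σ⁻¹ y) (σ⁻¹ x) = 0 := by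
      apply hpat
      show w (σ⁻¹ x) < w (σ⁻¹ y)
      rw [hw_def]
      simpa using (Fin.lt_def.1 hxy)
    rw [hz, zero_mul]
  · intro i j hij
    rw [ha_def, Matrix.diagonal_apply_ne _ hij]
  · intro i
    rw [ha_def, Matrix.diagonal_apply_eq]
    exact inv_pos.2 (hdvpos i)
  · intro i
    rw [hm_def, Matrix.mul_diagonal, Matrix.diagonal_mul, Matrix.transpose_apply,
      hlMi_diag i, hlM.1 i, inv_one]
    rw [mul_one]
    exact mul_inv_cancel₀ (ne_of_gt (hdvpos i))
  · intro i j hij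
    rw [hm_def, Matrix.mul_diagonal, Matrix.diagonal_mul, Matrix.transpose_apply,
      hlMi_low j i hij, mul_zero, zero_mul]
  · -- l = k * a * m
    rw [hkflip, hl_def, ha_def, hm_def]
    symm
    calc vMᵀ * lMᵀ * Matrix.diagonal (fun i => (dv i)⁻¹) *
          (Matrix.diagonal dv * (lM⁻¹)ᵀ * Matrix.diagonal (fun i => (dv i)⁻¹))
        = vMᵀ * (lMᵀ * ((Matrix.diagonal (fun i => (dv i)⁻¹) * Matrix.diagonal dv) *
            ((lM⁻¹)ᵀ * Matrix.diagonal (fun i => (dv i)⁻¹)))) := by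
          simp only [Matrix.mul_assoc]
      _ = vMᵀ * (lMᵀ * ((lM⁻¹)ᵀ * Matrix.diagonal (fun i => (dv i)⁻¹))) := by
          rw [Matrix.diagonal_mul_diagonal]
          have hone : (fun i => (dv i)⁻¹ * dv i) = fun _ => (1 : ℝ) :=
            funext fun i => inv_mul_cancel₀ (ne_of_gt (hdvpos i))
          rw [hone, Matrix.diagonal_one, Matrix.one_mul]
      _ = vMᵀ * Matrix.diagonal (fun i => (dv i)⁻¹) := by
          rw [← Matrix.mul_assoc lMᵀ, ← Matrix.transpose_mul, hlMm', Matrix.transpose_one,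
            Matrix.one_mul]


end Stmt5Aux

theorem stmt_5 (n : ℕ) (hn : 1 ≤ n) (σ : Equiv.Perm (Fin n))
    (k : Matrix (Fin n) (Fin n) ℝ) (hk : IsSO k) :
    (∃ l a m : Matrix (Fin n) (Fin n) ℝ,
        IsUnitLower l ∧ IsUnitLower (permMat σ * l * (permMat σ)⁻¹) ∧
        IsPosDiagonal a ∧ IsUnitUpper m ∧ l = k * a * m) ↔
    ((∃ u l₀ : Matrix (Fin n) (Fin n) ℝ, IsUpperPos u ∧ IsUnitLower l₀ ∧ k = u * l₀) ∧
      (∃ u' l' : Matrix (Fin n) (Fin n) ℝ, IsUpperPos u' ∧ IsUnitLower l' ∧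
        IsUnitLower ((permMat σ)⁻¹ * l' * permMat σ) ∧
        permMat σ * k * (permMat σ)⁻¹ = u' * l')) := by
  obtain ⟨hk1, hkdet⟩ := hk
  constructor
  · rintro ⟨l, a, m, hl, hlt, ha, hm, heq⟩
    exact Stmt5Aux.forward_dir σ k l a m hk1 hl hlt ha hm heq
  · rintro ⟨⟨u, l₀, hu, hl₀, hkeq⟩, u', l', hu', hl'1, hl'2, hk2'⟩
    exact Stmt5Aux.backward_dir σ k u' l' hk1 hu' hl'2 hk2'
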